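/- Let F be a 2-CNF formula over n variables with m clauses C_1,…,C_m, each containing two literals on distinct variables, and let p_1,…,p_m ∈ ℝ^n be the corresponding reduction points. Suppose there is an assignment τ and a set R of at least r clause indices such that for each i ∈ R exactly one literal of C_i is true under τ. Then there exist w ∈ {−1, 1}^n and a bonus vector v : {1,…,m} → ℝ with at most m − r nonzero values, each nonzero value lying in {−2, 2}, such that ∑_{j=1}^n w_j·p_i[j] + v(i) = 0 for every i ∈ {1,…,m}. In particular, assigning bonus 0 to every zero point of the reduced dataset, all adjusted scores equal 0, so the adjusted scores are non-increasing along the ranking π of the reduction. -/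

import Mathlib

/-- The position (0-indexed) of the clause point `p_i` in the ranking `π` of the
reduction: the dataset consists of `(m+1)·n²` zero points and `m` clause points,
listed as `n²` zeros, `p_1`, `n²` zeros, `p_2`, …, `p_m`, `n²` zeros. -/
def clauseIdx (n m : ℕ) (i : Fin m) : Fin ((m + 1) * n ^ 2 + m) :=
  ⟨((i : ℕ) + 1) * n ^ 2 + (i : ℕ), by
    have h1 : ((i : ℕ) + 1) * n ^ 2 ≤ (m + 1) * n ^ 2 :=
      Nat.mul_le_mul_right _ (Nat.succ_le_succ i.isLt.le)
    exact add_lt_add_of_le_of_lt h1 i.isLt⟩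

/-- The literal with sign `s ∈ {1, −1}` on a variable with truth value `b` is true:
a positive literal (`s = 1`) is true when `b = true`, a negated literal (`s = −1`)
is true when `b = false`. -/
def litTrue (s : ℝ) (b : Bool) : Prop :=
  (s = 1 ∧ b = true) ∨ (s = -1 ∧ b = false)

lemma clauseIdx_inj (n m : ℕ) : Function.Injective (clauseIdx n m) := by
  intro a b hab
  have h : ((a : ℕ) + 1) * n ^ 2 + (a : ℕ) = ((b : ℕ) + 1) * n ^ 2 + (b : ℕ) :=
    congrArg Fin.val hab
  have h2 : (a : ℕ) * (n ^ 2 + 1) = (b : ℕ) * (n ^ 2 + 1) := by ring_nf; ring_nf at h; omega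
  have := Nat.eq_of_mul_eq_mul_right (Nat.succ_pos _) h2
  exact Fin.ext this

lemma lit_mul (s : ℝ) (b : Bool) (hs : s = 1 ∨ s = -1) :
    ((if b then (1:ℝ) else -1) * s = 1 ∧ litTrue s b) ∨
    ((if b then (1:ℝ) else -1) * s = -1 ∧ ¬ litTrue s b) := by
  unfold litTrue
  rcases hs with hs | hs <;> cases b <;> simp [hs] <;> norm_num

/-- completeness of the reduction: if an assignment `τ` makes exactly one
literal true in each clause of a set `R` of at least `r` clauses, then there is a weight
vector `w ∈ {−1,1}^n` and a bonus vector `v` on the clause points with at most `m − r`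
nonzero values, each in `{−2, 2}`, such that every adjusted clause-point score is `0`;
extending by bonus `0` on the zero points, all adjusted scores are `0`, so they are
non-increasing along the ranking `π` of the reduction. -/
theorem stmt_1 (n m r : ℕ)
    (va vb : Fin m → Fin n) (sa sb : Fin m → ℝ)
    (hvab : ∀ i, va i ≠ vb i)
    (hsa : ∀ i, sa i = 1 ∨ sa i = -1) (hsb : ∀ i, sb i = 1 ∨ sb i = -1)
    (p : Fin m → Fin n → ℝ)
    (hp : ∀ i j, p i j =
      (if j = va i then sa i else 0) + (if j = vb i then sb i else 0))
    (τ : Fin n → Bool) (R : Finset (Fin m)) (hR : r ≤ R.card)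
    (hτ : ∀ i ∈ R, Xor' (litTrue (sa i) (τ (va i))) (litTrue (sb i) (τ (vb i))))
    (D : Fin ((m + 1) * n ^ 2 + m) → Fin n → ℝ)
    (hD1 : ∀ i, D (clauseIdx n m i) = p i)
    (hD2 : ∀ idx, (∀ i, idx ≠ clauseIdx n m i) → D idx = 0) :
    ∃ w : Fin n → ℝ, (∀ j, w j = 1 ∨ w j = -1) ∧
      ∃ v : Fin m → ℝ,
        (Finset.univ.filter fun i => v i ≠ 0).card ≤ m - r ∧
        (∀ i, v i ≠ 0 → v i = 2 ∨ v i = -2) ∧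
        (∀ i, (∑ j, w j * p i j) + v i = 0) ∧
        ∃ V : Fin ((m + 1) * n ^ 2 + m) → ℝ,
          (∀ i, V (clauseIdx n m i) = v i) ∧
          (∀ idx, (∀ i, idx ≠ clauseIdx n m i) → V idx = 0) ∧
          (∀ idx, (∑ j, w j * D idx j) + V idx = 0) ∧
          ∀ idx idx' : Fin ((m + 1) * n ^ 2 + m), idx ≤ idx' →
            (∑ j, w j * D idx' j) + V idx' ≤ (∑ j, w j * D idx j) + V idx := by
  set w : Fin n → ℝ := fun j => if τ j then 1 else -1 with hw
  have hw1 : ∀ j, w j = 1 ∨ w j = -1 := by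
    intro j; by_cases h : τ j <;> simp [hw, h]
  -- the clause score
  have hsum : ∀ i, (∑ j, w j * p i j) = w (va i) * sa i + w (vb i) * sb i := by
    intro i
    simp only [hp, mul_add]
    rw [Finset.sum_add_distrib]
    congr 1
    · rw [show (∑ j, w j * if j = va i then sa i else 0)
          = ∑ j, if j = va i then w j * sa i else 0 by
        apply Finset.sum_congr rfl; intro j _; split <;> simp]
      simp
    · rw [show (∑ j, w j * if j = vb i then sb i else 0)
          = ∑ j, if j = vb i then w j * sb i else 0 by
        apply Finset.sum_congr rfl; intro j _; split <;> simp]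
      simp
  refine ⟨w, hw1, fun i => -(∑ j, w j * p i j), ?_, ?_, fun i => by ring, ?_⟩
  · -- card bound
    have hsub : (Finset.univ.filter fun i => -(∑ j, w j * p i j) ≠ 0) ⊆ Rᶜ := by
      intro i hi
      simp only [Finset.mem_filter, ne_eq] at hi
      rw [Finset.mem_compl]
      intro hiR
      apply hi.2
      have := hτ i hiR
      rcases lit_mul (sa i) (τ (va i)) (hsa i) with ⟨ha, hla⟩ | ⟨ha, hla⟩ <;>
        rcases lit_mul (sb i) (τ (vb i)) (hsb i) with ⟨hb, hlb⟩ | ⟨hb, hlb⟩ <;>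
        [skip; skip; skip; skip] <;>
        first
        | (exfalso; rcases this with ⟨h1, h2⟩ | ⟨h1, h2⟩ <;> tauto)
        | (rw [hsum i, hw] at *; rw [ha, hb]; ring)
    calc (Finset.univ.filter fun i => -(∑ j, w j * p i j) ≠ 0).card
        ≤ Rᶜ.card := Finset.card_le_card hsub
      _ = Fintype.card (Fin m) - R.card := Finset.card_compl R
      _ ≤ m - r := by simp; omega
  · -- values in {2,-2}
    intro i hne
    have hs := hsum i
    simp only [hw] at hs
    simp only [hsum i] at hne ⊢; simp only [hw] at hne ⊢
    rcases lit_mul (sa i) (τ (va i)) (hsa i) with ⟨ha, _⟩ | ⟨ha, _⟩ <;>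
      rcases lit_mul (sb i) (τ (vb i)) (hsb i) with ⟨hb, _⟩ | ⟨hb, _⟩ <;>
      rw [ha, hb] at hne ⊢ <;> revert hne <;> norm_num
  · -- the global bonus vector
    classical
    set V : Fin ((m + 1) * n ^ 2 + m) → ℝ := fun idx =>
      if h : ∃ i, idx = clauseIdx n m i then -(∑ j, w j * p h.choose j) else 0 with hV
    have hV1 : ∀ i, V (clauseIdx n m i) = -(∑ j, w j * p i j) := by
      intro i
      have hex : ∃ i', clauseIdx n m i = clauseIdx n m i' := ⟨i, rfl⟩
      have : hex.choose = i := (clauseIdx_inj n m hex.choose_spec.symm)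
      simp only [hV, dif_pos hex, this]
    have hV2 : ∀ idx, (∀ i, idx ≠ clauseIdx n m i) → V idx = 0 := by
      intro idx h
      have : ¬ ∃ i, idx = clauseIdx n m i := by push_neg; exact h
      simp only [hV, dif_neg this]
    have hzero : ∀ idx, (∑ j, w j * D idx j) + V idx = 0 := by
      intro idx
      by_cases hex : ∃ i, idx = clauseIdx n m i
      · obtain ⟨i, rfl⟩ := hex
        rw [hD1, hV1]; ring
      · push_neg at hex
        rw [hD2 idx hex, hV2 idx hex]
        simp
    exact ⟨V, hV1, hV2, hzero, fun idx idx' _ => by rw [hzero, hzero]⟩
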